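/- arXiv:2007.13611 — 3 statements merged into one kernel-verified Lean document; each statement's English description precedes it below -/
import Mathlib

section
/- Let G be connected with m > n (i.e. G has at least two cycles). Then the algebraic multiplicity of 1 as an eigenvalue of B (its multiplicity as a root of the characteristic polynomial of B) equals m − n + 1. -/
open Matrix Polynomial BigOperators

set_option linter.unusedSectionVars false
set_option maxHeartbeats 1000000

variable {V : Type*}

/-- The non-backtracking matrix of a graph `G`, indexed by darts (oriented edges):
`B[(k→l),(i→j)] = 1` if `j = k` and `i ≠ l`, else `0`. -/
def nbMatrix [DecidableEq V] (G : SimpleGraph V) : Matrix G.Dart G.Dart ℂ :=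
  fun e f => if f.snd = e.fst ∧ f.fst ≠ e.snd then 1 else 0

namespace NBAux

open SimpleGraph Finset

variable [DecidableEq V] [Fintype V] (G : SimpleGraph V) [DecidableRel G.Adj]

/-- Dart–tail incidence matrix. -/
def SM : Matrix G.Dart V ℂ := fun e v => if e.fst = v then 1 else 0

/-- Dart–head incidence matrix. -/
def TM : Matrix G.Dart V ℂ := fun e v => if e.snd = v then 1 else 0

/-- Dart reversal permutation matrix. -/
def tau : Matrix G.Dart G.Dart ℂ := fun e f => if f = e.symm then 1 else 0

lemma tau_mul_tau : tau G * tau G = 1 := by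
  ext e f
  simp only [tau, mul_apply, ite_mul, one_mul, zero_mul]
  rw [Finset.sum_ite_eq' univ e.symm (fun g => if f = g.symm then (1:ℂ) else 0)]
  simp [one_apply, Dart.symm_symm, eq_comm]

lemma tau_mul_SM : tau G * SM G = TM G := by
  ext e v
  simp only [tau, SM, TM, mul_apply, ite_mul, one_mul, zero_mul]
  rw [Finset.sum_ite_eq' univ e.symm (fun g => if g.fst = v then (1:ℂ) else 0)]
  simp [Dart.symm_toProd]

lemma SM_mul_TMt : SM G * (TM G)ᵀ = fun e f => if f.snd = e.fst then (1:ℂ) else 0 := by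
  ext e f
  simp only [SM, TM, mul_apply, transpose_apply, ite_mul, one_mul, zero_mul, mul_ite, mul_one,
    mul_zero]
  rw [Finset.sum_ite_eq univ f.snd (fun v => if e.fst = v then (1:ℂ) else 0)]
  simp [eq_comm]

lemma nb_eq : nbMatrix G = SM G * (TM G)ᵀ - tau G := by
  rw [SM_mul_TMt]
  ext e f
  change _ = (fun e f : G.Dart => if f.snd = e.fst then (1:ℂ) else 0) e f - tau G e f
  simp only [nbMatrix, tau, Matrix.sub_apply]
  by_cases h1 : f = e.symm
  · subst h1
    simp only [Dart.symm_toProd, Prod.snd_swap, Prod.fst_swap, ite_true, ne_eq, not_true_eq_false,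
      and_false, if_true, if_false]
    norm_num
  · rw [if_neg h1, sub_zero]
    by_cases h2 : f.snd = e.fst
    · have h3 : f.fst ≠ e.snd := fun h3 => h1 (Dart.ext _ _ (Prod.ext h3 h2))
      rw [if_pos h2, if_pos ⟨h2, h3⟩]
    · rw [if_neg h2, if_neg (fun hc => h2 hc.1)]

lemma TMt_mul_SM : (TM G)ᵀ * SM G = G.adjMatrix ℂ := by
  ext u v
  simp only [TM, SM, mul_apply, transpose_apply, ite_mul, one_mul, zero_mul, mul_ite, mul_one,
    mul_zero, adjMatrix_apply]
  simp_rw [← ite_and]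
  by_cases hadj : G.Adj v u
  · rw [if_pos hadj.symm]
    rw [Finset.sum_eq_single_of_mem (⟨(v,u), hadj⟩ : G.Dart) (mem_univ _)]
    · simp
    · intro e _ hne
      rw [if_neg]
      rintro ⟨h1, h2⟩
      exact hne (Dart.ext _ _ (Prod.ext h1 h2))
  · rw [if_neg (fun h => hadj h.symm), Finset.sum_eq_zero]
    intro e _
    rw [if_neg]
    rintro ⟨h1, h2⟩
    exact hadj (h1 ▸ h2 ▸ e.adj)

lemma dart_snd_fiber_card_eq_degree (v : V) :
    #{d : G.Dart | d.snd = v} = G.degree v := by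
  rw [← dart_fst_fiber_card_eq_degree]
  apply Finset.card_bij (fun d _ => d.symm)
  · intro a ha
    simp only [mem_filter, mem_univ, true_and] at ha ⊢
    simp [Dart.symm_toProd, ha]
  · intro a _ b _ h
    simpa using congrArg Dart.symm h
  · intro b hb
    refine ⟨b.symm, ?_, by simp⟩
    simp only [mem_filter, mem_univ, true_and] at hb ⊢
    simp [Dart.symm_toProd, hb]

lemma TMt_mul_TM : (TM G)ᵀ * TM G = G.degMatrix ℂ := by
  ext u v
  simp only [TM, mul_apply, transpose_apply, ite_mul, one_mul, zero_mul, mul_ite, mul_one, mul_zero]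
  simp_rw [← ite_and]
  by_cases huv : u = v
  · subst huv
    simp only [and_self, degMatrix, diagonal_apply_eq]
    rw [Finset.sum_boole]
    exact_mod_cast dart_snd_fiber_card_eq_degree G u
  · rw [Finset.sum_eq_zero, degMatrix, diagonal_apply_ne _ huv]
    intro e _
    rw [if_neg]
    rintro ⟨h1, h2⟩
    exact huv (h1 ▸ h2 ▸ rfl)

noncomputable def eps : G.Dart → ℂ :=
  fun e => if (Fintype.equivFin V) e.fst < (Fintype.equivFin V) e.snd then 1 else -1

lemma eps_mul_self (e : G.Dart) : eps G e * eps G e = 1 := by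
  unfold eps; split <;> norm_num

lemma eps_symm (e : G.Dart) : eps G e.symm = - eps G e := by
  unfold eps
  have hne : (Fintype.equivFin V) e.fst ≠ (Fintype.equivFin V) e.snd :=
    fun h => e.fst_ne_snd ((Fintype.equivFin V).injective h)
  simp only [Dart.symm_toProd, Prod.fst_swap, Prod.snd_swap]
  rcases lt_or_gt_of_ne hne with h | h
  · rw [if_pos h, if_neg (not_lt_of_gt h)]
  · rw [if_neg (not_lt_of_gt h), if_pos h, neg_neg]
lemma det_X_one_add_tau :
    det ((X:ℂ[X]) • (1 : Matrix G.Dart G.Dart ℂ[X]) + (tau G).map C)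
      = ((X:ℂ[X])^2 - 1) ^ G.edgeFinset.card := by
  classical
  set tC : Matrix G.Dart G.Dart ℂ[X] := (tau G).map C with htC
  set P : ℂ[X] := det ((X:ℂ[X]) • (1 : Matrix G.Dart G.Dart ℂ[X]) + tC) with hP
  set Q : ℂ[X] := ((X:ℂ[X])^2 - 1) ^ G.edgeFinset.card with hQ
  set Dm : Matrix G.Dart G.Dart ℂ[X] := Matrix.diagonal (fun e => C (eps G e)) with hDm
  have hDD : Dm * Dm = 1 := by
    rw [hDm, diagonal_mul_diagonal]
    convert diagonal_one
    rw [← Polynomial.C_mul, eps_mul_self, Polynomial.C_1]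
  have htt : tC * tC = 1 := by
    rw [htC, ← Matrix.map_mul, tau_mul_tau, Matrix.map_one C (map_zero C) (map_one C)]
  have hDtD : Dm * tC * Dm = -tC := by
    ext e f
    rw [hDm, htC, Matrix.mul_diagonal, Matrix.diagonal_mul, neg_apply]
    simp only [map_apply, tau]
    by_cases h : f = e.symm
    · subst h
      rw [if_pos rfl, Polynomial.C_1, mul_one, ← Polynomial.C_mul, eps_symm, mul_neg,
        eps_mul_self]
      simp
    · rw [if_neg h, map_zero, mul_zero, zero_mul, neg_zero]
  have hconj : Dm * ((X:ℂ[X]) • 1 - tC) * Dm = (X:ℂ[X]) • 1 + tC := by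
    rw [Matrix.mul_sub, Matrix.sub_mul, Matrix.mul_smul, Matrix.mul_one, Matrix.smul_mul, hDD,
      hDtD, sub_neg_eq_add]
  have hdets : P = det ((X:ℂ[X]) • 1 - tC) := by
    rw [hP, ← hconj, det_mul, det_mul]
    have h1 : det Dm * det Dm = 1 := by rw [← det_mul, hDD, det_one]
    calc det Dm * det ((X:ℂ[X]) • 1 - tC) * det Dm
        = det Dm * det Dm * det ((X:ℂ[X]) • 1 - tC) := by ring
      _ = det ((X:ℂ[X]) • 1 - tC) := by rw [h1, one_mul]
  have h1 : ((X:ℂ[X]) • (1 : Matrix G.Dart G.Dart ℂ[X])) * ((X:ℂ[X]) • 1)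
      = ((X:ℂ[X])^2) • 1 := by
    rw [Matrix.smul_mul, Matrix.one_mul, smul_smul, sq]
  have h2 : tC * ((X:ℂ[X]) • (1 : Matrix G.Dart G.Dart ℂ[X])) = (X:ℂ[X]) • tC := by
    rw [Matrix.mul_smul, Matrix.mul_one]
  have h3 : ((X:ℂ[X]) • (1 : Matrix G.Dart G.Dart ℂ[X])) * tC = (X:ℂ[X]) • tC := by
    rw [Matrix.smul_mul, Matrix.one_mul]
  have hprod : ((X:ℂ[X]) • (1 : Matrix G.Dart G.Dart ℂ[X]) + tC) * ((X:ℂ[X]) • 1 - tC)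
      = ((X:ℂ[X])^2 - 1) • 1 := by
    rw [Matrix.mul_sub, Matrix.add_mul, Matrix.add_mul, htt, h1, h2, h3, sub_smul, one_smul,
      add_comm (((X:ℂ[X])^2) • (1 : Matrix G.Dart G.Dart ℂ[X])) (((X:ℂ[X])) • tC),
      add_sub_add_left_eq_sub]
  have hPP : P * P = ((X:ℂ[X])^2 - 1) ^ Fintype.card G.Dart := by
    nth_rewrite 2 [hdets]
    rw [hP, ← det_mul, hprod, det_smul, det_one, mul_one]
  have hQQ : Q * Q = ((X:ℂ[X])^2 - 1) ^ Fintype.card G.Dart := by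
    rw [hQ, ← pow_add, G.dart_card_eq_twice_card_edges, two_mul]
  have hfac : (P - Q) * (P + Q) = 0 := by
    have : (P - Q) * (P + Q) = P * P - Q * Q := by ring
    rw [this, hPP, hQQ, sub_self]
  have hPm : P.Monic := by
    have hch : (X:ℂ[X]) • (1 : Matrix G.Dart G.Dart ℂ[X]) + tC = charmatrix (-(tau G)) := by
      ext i j
      rw [charmatrix_apply]
      simp only [Matrix.add_apply, Matrix.smul_apply, one_apply, htC, map_apply, Matrix.neg_apply, map_neg, neg_neg,
        diagonal_apply, smul_eq_mul]
      split_ifs <;> ring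
    rw [hP, hch]
    exact Matrix.charpoly_monic _
  have hQm : Q.Monic := by
    have : ((X:ℂ[X])^2 - 1) = X^2 - C 1 := by rw [Polynomial.C_1]
    rw [hQ, this]
    exact (monic_X_pow_sub_C (1:ℂ) two_ne_zero).pow _
  rcases mul_eq_zero.mp hfac with h | h
  · exact sub_eq_zero.mp h
  · exfalso
    have hPQ : P = -Q := eq_neg_of_add_eq_zero_left h
    have : (1:ℂ) = -1 := by
      have := hPm.leadingCoeff
      rw [hPQ, leadingCoeff_neg, hQm.leadingCoeff] at this
      exact this.symm
    norm_num at this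

/-- The vertex-side matrix `(x²−1)·I − x·A + D` as a matrix of polynomials. -/
noncomputable def Hmat : Matrix V V ℂ[X] :=
  ((X:ℂ[X])^2 - 1) • 1 - (X:ℂ[X]) • (G.adjMatrix ℂ[X]) + G.degMatrix ℂ[X]

lemma map_Hmat (x : ℂ) : (Hmat G).map (evalRingHom x) =
    (x^2 - 1) • (1 : Matrix V V ℂ) - x • G.adjMatrix ℂ + G.degMatrix ℂ := by
  ext u v
  simp only [Hmat, map_apply, Matrix.sub_apply, Matrix.add_apply, Matrix.smul_apply, one_apply, adjMatrix_apply,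
    degMatrix, diagonal_apply, smul_eq_mul]
  split_ifs <;> simp

lemma map_X_smul_one_add_tauC (x : ℂ) :
    (((X:ℂ[X]) • (1 : Matrix G.Dart G.Dart ℂ[X]) + (tau G).map C).map (evalRingHom x))
      = x • (1 : Matrix G.Dart G.Dart ℂ) + tau G := by
  ext e f
  simp only [map_apply, Matrix.add_apply, Matrix.smul_apply, one_apply, tau, smul_eq_mul]
  split_ifs <;> simp

lemma det_x_smul_one_add_tau (x : ℂ) :
    det (x • (1 : Matrix G.Dart G.Dart ℂ) + tau G) = (x^2 - 1) ^ G.edgeFinset.card := by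
  have h := congrArg (evalRingHom x) (det_X_one_add_tau G)
  rw [RingHom.map_det, RingHom.mapMatrix_apply, map_X_smul_one_add_tauC] at h
  rw [h]
  simp

lemma det_scalar_eq (hmn : Fintype.card V ≤ G.edgeFinset.card) (x : ℂ) (hx : x^2 - 1 ≠ 0) :
    det (x • (1 : Matrix G.Dart G.Dart ℂ) - nbMatrix G)
      = (x^2 - 1)^(G.edgeFinset.card - Fintype.card V) *
        det ((x^2-1) • (1 : Matrix V V ℂ) - x • G.adjMatrix ℂ + G.degMatrix ℂ) := by
  classical
  set A := G.adjMatrix ℂ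
  set Dg := G.degMatrix ℂ
  set K : Matrix G.Dart G.Dart ℂ := (x^2-1)⁻¹ • (x • 1 - tau G) with hKdef
  have hprod : (x • (1 : Matrix G.Dart G.Dart ℂ) + tau G) * (x • 1 - tau G) = (x^2-1) • 1 := by
    rw [Matrix.mul_sub, Matrix.mul_smul, Matrix.mul_one, Matrix.add_mul, Matrix.smul_mul,
      Matrix.one_mul, tau_mul_tau, smul_add, smul_smul, ← sq, sub_smul, one_smul]
    abel
  have hK : (x • (1 : Matrix G.Dart G.Dart ℂ) + tau G) * K = 1 := by
    rw [hKdef, Matrix.mul_smul, hprod, smul_smul, inv_mul_cancel₀ hx, one_smul]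
  have step1 : x • (1 : Matrix G.Dart G.Dart ℂ) - nbMatrix G
      = (x • 1 + tau G) * (1 - K * (SM G * (TM G)ᵀ)) := by
    rw [Matrix.mul_sub, Matrix.mul_one, ← Matrix.mul_assoc, hK, Matrix.one_mul, nb_eq]
    abel
  have step2 : det (1 - K * (SM G * (TM G)ᵀ)) = det (1 - (TM G)ᵀ * (K * SM G)) := by
    rw [← Matrix.mul_assoc, det_one_sub_mul_comm]
  have step3 : (TM G)ᵀ * (K * SM G) = (x^2-1)⁻¹ • (x • A - Dg) := by
    rw [hKdef, Matrix.smul_mul, Matrix.sub_mul, Matrix.smul_mul, Matrix.one_mul, tau_mul_SM,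
      Matrix.mul_smul, Matrix.mul_sub, Matrix.mul_smul, TMt_mul_SM, TMt_mul_TM]
  have step4 : det ((x^2-1) • (1 : Matrix V V ℂ) - x • A + Dg)
      = (x^2-1)^(Fintype.card V) * det (1 - (TM G)ᵀ * (K * SM G)) := by
    rw [step3]
    have hmat : (x^2-1) • ((1 : Matrix V V ℂ) - (x^2-1)⁻¹ • (x • A - Dg))
        = (x^2-1) • (1 : Matrix V V ℂ) - x • A + Dg := by
      rw [smul_sub, smul_smul, mul_inv_cancel₀ hx, one_smul]
      abel
    rw [← hmat, det_smul]
  rw [step1, det_mul, det_x_smul_one_add_tau, step2, step4, ← mul_assoc, ← pow_add,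
    Nat.sub_add_cancel hmn]


lemma eval_charpoly (x : ℂ) :
    eval x (nbMatrix G).charpoly = det (x • (1 : Matrix G.Dart G.Dart ℂ) - nbMatrix G) := by
  rw [Matrix.charpoly]
  rw [show eval x (charmatrix (nbMatrix G)).det = (evalRingHom x) (charmatrix (nbMatrix G)).det
    from rfl]
  rw [RingHom.map_det, RingHom.mapMatrix_apply]
  congr 1
  ext i j
  simp only [map_apply]
  rw [charmatrix_apply]
  simp only [map_sub, Matrix.sub_apply, Matrix.smul_apply, one_apply, diagonal_apply, smul_eq_mul]
  split_ifs <;> simp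

lemma charpoly_nb_eq (hmn : Fintype.card V ≤ G.edgeFinset.card) :
    (nbMatrix G).charpoly
      = ((X:ℂ[X])^2 - 1)^(G.edgeFinset.card - Fintype.card V) * det (Hmat G) := by
  apply Polynomial.eq_of_infinite_eval_eq
  have hsub : {x : ℂ | x^2 - 1 ≠ 0} ⊆
      {x : ℂ | eval x (nbMatrix G).charpoly
        = eval x (((X:ℂ[X])^2 - 1)^(G.edgeFinset.card - Fintype.card V) * det (Hmat G))} := by
    intro x hx
    simp only [Set.mem_setOf_eq] at hx ⊢
    rw [eval_charpoly, det_scalar_eq G hmn x hx, eval_mul, eval_pow, eval_sub, eval_pow, eval_X,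
      eval_one]
    congr 1
    rw [show eval x (Hmat G).det = (evalRingHom x) (Hmat G).det from rfl, RingHom.map_det,
      RingHom.mapMatrix_apply, map_Hmat]
  refine Set.Infinite.mono hsub ?_
  have hfin : ({1, -1} : Set ℂ).Finite := (Set.finite_singleton _).insert _
  refine Set.Infinite.mono ?_ hfin.infinite_compl
  intro x hx
  simp only [Set.mem_compl_iff, Set.mem_insert_iff, Set.mem_singleton_iff, not_or] at hx
  simp only [Set.mem_setOf_eq]
  intro hc
  have hfac : (x - 1) * (x + 1) = 0 := by linear_combination hc
  rcases mul_eq_zero.mp hfac with h | h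
  · exact hx.1 (by linear_combination h)
  · exact hx.2 (by linear_combination h)

lemma sum_col_Hmat (u : V) :
    ∑ v, Hmat G v u = ((X:ℂ[X]) - 1) * ((X:ℂ[X]) + 1 - (G.degree u : ℂ[X])) := by
  have h1 : ∑ v, (1 : Matrix V V ℂ[X]) v u = 1 := by
    simp [one_apply, Finset.sum_ite_eq]
  have h2 : ∑ v, (G.adjMatrix ℂ[X]) v u = (G.degree u : ℂ[X]) := by
    rw [degree_eq_sum_if_adj G u]
    apply Finset.sum_congr rfl
    intro v _
    simp [adjMatrix_apply, G.adj_comm]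
  have h3 : ∑ v, (G.degMatrix ℂ[X]) v u = (G.degree u : ℂ[X]) := by
    simp [degMatrix, diagonal_apply, Finset.sum_ite_eq]
  simp only [Hmat, Matrix.add_apply, Matrix.sub_apply, Matrix.smul_apply, smul_eq_mul]
  rw [Finset.sum_add_distrib, Finset.sum_sub_distrib, ← Finset.mul_sum, ← Finset.mul_sum, h1, h2,
    h3]
  ring

lemma det_Hmat_factor (v₀ : V) :
    det (Hmat G) = ((X:ℂ[X]) - 1) *
      det ((Hmat G).updateRow v₀ (fun u => (X:ℂ[X]) + 1 - (G.degree u : ℂ[X]))) := by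
  classical
  set H := Hmat G with hH
  set w : V → ℂ[X] := fun u => (X:ℂ[X]) + 1 - (G.degree u : ℂ[X]) with hw
  set E : Matrix V V ℂ[X] :=
    1 + Matrix.replicateCol Unit (fun v => if v = v₀ then (1:ℂ[X]) else 0) *
      Matrix.replicateRow Unit (fun u => if u = v₀ then (0:ℂ[X]) else 1) with hE
  have hdetE : det E = 1 := by
    rw [hE, det_one_add_replicateCol_mul_replicateRow]
    simp [dotProduct]
  have hEH : E * H = H.updateRow v₀ (fun u => ∑ v, H v u) := by
    ext i u
    rw [hE, Matrix.add_mul, Matrix.one_mul, Matrix.add_apply]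
    have hcr : ∀ j, (Matrix.replicateCol Unit (fun v => if v = v₀ then (1:ℂ[X]) else 0) *
        Matrix.replicateRow Unit (fun u => if u = v₀ then (0:ℂ[X]) else 1)) i j
          = (if i = v₀ then (1:ℂ[X]) else 0) * (if j = v₀ then (0:ℂ[X]) else 1) := by
      intro j
      simp [mul_apply, Matrix.replicateCol_apply, Matrix.replicateRow_apply]
    by_cases hi : i = v₀
    · subst hi
      rw [updateRow_self]
      have : (Matrix.replicateCol Unit (fun v => if v = i then (1:ℂ[X]) else 0) *
          Matrix.replicateRow Unit (fun u => if u = i then (0:ℂ[X]) else 1) * H) i u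
            = ∑ j, (if j = i then (0:ℂ[X]) else 1) * H j u := by
        rw [mul_apply]
        apply Finset.sum_congr rfl
        intro j _
        rw [hcr j, if_pos rfl, one_mul]
      rw [this]
      have h2 : ∀ j, (if j = i then (0:ℂ[X]) else 1) * H j u
          = H j u - (if j = i then H j u else 0) := by
        intro j; split <;> ring
      simp_rw [h2]
      rw [Finset.sum_sub_distrib, Finset.sum_ite_eq' Finset.univ i (fun j => H j u)]
      simp only [Finset.mem_univ, if_true]
      ring
    · rw [updateRow_ne hi]
      have : (Matrix.replicateCol Unit (fun v => if v = v₀ then (1:ℂ[X]) else 0) *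
          Matrix.replicateRow Unit (fun u => if u = v₀ then (0:ℂ[X]) else 1) * H) i u = 0 := by
        rw [mul_apply]
        apply Finset.sum_eq_zero
        intro j _
        rw [hcr j, if_neg hi, zero_mul, zero_mul]
      rw [this, add_zero]
  have hd : det H = det (E * H) := by rw [det_mul, hdetE, one_mul]
  rw [hd, hEH]
  have hfun : (fun u => ∑ v, H v u) = ((X:ℂ[X]) - 1) • w := by
    funext u
    rw [hH, sum_col_Hmat, Pi.smul_apply, hw, smul_eq_mul]
  rw [hfun, det_updateRow_smul]

lemma eval_one_det_updateRow (v₀ : V) :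
    eval 1 (det ((Hmat G).updateRow v₀ (fun u => (X:ℂ[X]) + 1 - (G.degree u : ℂ[X]))))
      = det ((G.lapMatrix ℂ).updateRow v₀ (fun u => 2 - (G.degree u : ℂ))) := by
  rw [show eval 1 (det ((Hmat G).updateRow v₀ (fun u => (X:ℂ[X]) + 1 - (G.degree u : ℂ[X]))))
      = (evalRingHom 1) (det ((Hmat G).updateRow v₀
        (fun u => (X:ℂ[X]) + 1 - (G.degree u : ℂ[X])))) from rfl,
    RingHom.map_det, RingHom.mapMatrix_apply]
  congr 1
  ext i u
  by_cases hi : i = v₀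
  · subst hi
    rw [map_apply, updateRow_self, updateRow_self]
    simp
    norm_num
  · rw [map_apply, updateRow_ne hi, updateRow_ne hi]
    simp only [Hmat, lapMatrix, degMatrix, Matrix.add_apply, Matrix.sub_apply, Matrix.smul_apply, one_apply,
      adjMatrix_apply, diagonal_apply, smul_eq_mul]
    split_ifs <;> simp <;> try ring

lemma lap_complex_entry (i j : V) :
    G.lapMatrix ℂ i j = ((G.lapMatrix ℝ i j : ℝ) : ℂ) := by
  simp only [lapMatrix, degMatrix, Matrix.sub_apply, diagonal_apply, adjMatrix_apply]
  split_ifs <;> push_cast <;> ring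

lemma lap_kernel_const (hconn : G.Connected) (y : V → ℂ)
    (hy : G.lapMatrix ℂ *ᵥ y = 0) (v w : V) : y v = y w := by
  have key : ∀ z : V → ℝ, (∀ i, ∑ j, G.lapMatrix ℝ i j * z j = 0) → z v = z w := by
    intro z hz
    have h0 : Matrix.toLin' (G.lapMatrix ℝ) z = 0 := by
      ext i
      simpa [Matrix.toLin'_apply, mulVec, dotProduct] using hz i
    exact (G.lapMatrix_mulVec_eq_zero_iff_forall_reachable (x := z)).mp (by rwa [Matrix.toLin'_apply] at h0) v w
      (hconn.preconnected v w)
  have hy' : ∀ i, ∑ j, G.lapMatrix ℂ i j * y j = 0 := by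
    intro i
    have := congrFun hy i
    simpa [mulVec, dotProduct] using this
  have hre : ∀ i, ∑ j, G.lapMatrix ℝ i j * (y j).re = 0 := by
    intro i
    have h := congrArg Complex.re (hy' i)
    rw [Complex.re_sum] at h
    simp only [Complex.zero_re] at h
    rw [← h]
    apply Finset.sum_congr rfl
    intro j _
    rw [lap_complex_entry]
    simp [Complex.mul_re]
  have him : ∀ i, ∑ j, G.lapMatrix ℝ i j * (y j).im = 0 := by
    intro i
    have h := congrArg Complex.im (hy' i)
    rw [Complex.im_sum] at h
    simp only [Complex.zero_im] at h
    rw [← h]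
    apply Finset.sum_congr rfl
    intro j _
    rw [lap_complex_entry]
    simp [Complex.mul_im]
  exact Complex.ext (key _ hre) (key _ him)

lemma sum_col_lap (u : V) : ∑ v, G.lapMatrix ℂ v u = 0 := by
  simp only [lapMatrix, degMatrix, Matrix.sub_apply, diagonal_apply, adjMatrix_apply]
  rw [Finset.sum_sub_distrib]
  have h1 : ∑ v, (if v = u then ((G.degree v : ℂ)) else 0) = (G.degree u : ℂ) := by
    rw [Finset.sum_ite_eq' Finset.univ u (fun v => ((G.degree v : ℂ)))]
    simp
  have h2 : ∑ v, (if G.Adj v u then (1:ℂ) else 0) = (G.degree u : ℂ) := by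
    rw [degree_eq_sum_if_adj G u]
    apply Finset.sum_congr rfl
    intro v _
    simp [G.adj_comm]
  rw [h1, h2, sub_self]

lemma det_M2_ne_zero (hconn : G.Connected) (hm : Fintype.card V < G.edgeFinset.card) (v₀ : V) :
    det ((G.lapMatrix ℂ).updateRow v₀ (fun u => 2 - (G.degree u : ℂ))) ≠ 0 := by
  intro hdet
  obtain ⟨y, hy0, hy⟩ := Matrix.exists_mulVec_eq_zero_iff.mpr hdet
  have hrow : ∀ v, v ≠ v₀ → (G.lapMatrix ℂ *ᵥ y) v = 0 := by
    intro v hv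
    have h := congrFun hy v
    rw [Pi.zero_apply] at h
    rw [show (G.lapMatrix ℂ *ᵥ y) v = ((G.lapMatrix ℂ).updateRow v₀
      (fun u => 2 - (G.degree u : ℂ)) *ᵥ y) v by simp [mulVec, updateRow_ne hv], h]
  have hsum : ∑ v, (G.lapMatrix ℂ *ᵥ y) v = 0 := by
    simp only [mulVec, dotProduct]
    rw [Finset.sum_comm]
    apply Finset.sum_eq_zero
    intro u _
    rw [← Finset.sum_mul, sum_col_lap, zero_mul]
  have hv₀ : (G.lapMatrix ℂ *ᵥ y) v₀ = 0 := by
    rw [← Finset.add_sum_erase _ _ (Finset.mem_univ v₀)] at hsum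
    rw [Finset.sum_eq_zero (fun v hv => hrow v (Finset.ne_of_mem_erase hv)), add_zero] at hsum
    exact hsum
  have hLy : G.lapMatrix ℂ *ᵥ y = 0 := by
    ext v
    by_cases hv : v = v₀
    · rw [hv]; exact hv₀
    · exact hrow v hv
  have hconst := lap_kernel_const G hconn y hLy
  have hyv₀ : y v₀ ≠ 0 := by
    intro h0
    apply hy0
    funext v
    rw [Pi.zero_apply, hconst v v₀, h0]
  have heq : ∑ u, (2 - (G.degree u : ℂ)) * y u = 0 := by
    have h := congrFun hy v₀
    rw [Pi.zero_apply] at h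
    rw [← h]
    simp [mulVec, dotProduct, updateRow_self]
  have heq2 : (∑ u, (2 - (G.degree u : ℂ))) * y v₀ = 0 := by
    rw [Finset.sum_mul, ← heq]
    apply Finset.sum_congr rfl
    intro u _
    rw [hconst u v₀]
  have hcoef : (∑ u, (2 - (G.degree u : ℂ)))
      = 2 * (Fintype.card V : ℂ) - 2 * (G.edgeFinset.card : ℂ) := by
    rw [Finset.sum_sub_distrib, Finset.sum_const, Finset.card_univ]
    have : ∑ u, (G.degree u : ℂ) = ((∑ u, G.degree u : ℕ) : ℂ) := by
      rw [Nat.cast_sum]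
    rw [this, G.sum_degrees_eq_twice_card_edges]
    push_cast
    ring
  have hc0 : (∑ u, (2 - (G.degree u : ℂ))) ≠ 0 := by
    rw [hcoef]
    intro h
    have h2 : (Fintype.card V : ℂ) = (G.edgeFinset.card : ℂ) := by linear_combination h / 2
    have h3 : Fintype.card V = G.edgeFinset.card := Nat.cast_injective h2
    omega

  rcases mul_eq_zero.mp heq2 with h | h
  · exact hc0 h
  · exact hyv₀ h

lemma rootMultiplicity_pow' {p : ℂ[X]} (hp : p ≠ 0) (a : ℂ) (k : ℕ) :
    (p ^ k).rootMultiplicity a = k * p.rootMultiplicity a := by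
  induction k with
  | zero =>
    rw [pow_zero, zero_mul]
    apply Polynomial.rootMultiplicity_eq_zero
    simp [Polynomial.IsRoot]
  | succ k ih =>
    rw [pow_succ, Polynomial.rootMultiplicity_mul (mul_ne_zero (pow_ne_zero _ hp) hp), ih]
    ring

end NBAux

/-- For a connected graph with `m > n`, the algebraic multiplicity of `1`
as an eigenvalue of `B` is `m − n + 1`. -/
theorem nbMatrix_algebraic_multiplicity_one
    [DecidableEq V] [Fintype V] (G : SimpleGraph V) [DecidableRel G.Adj]
    (hconn : G.Connected) (hm : Fintype.card V < G.edgeFinset.card) :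
    (nbMatrix G).charpoly.rootMultiplicity 1
      = G.edgeFinset.card - Fintype.card V + 1 := by
  classical
  have v₀ : V := hconn.nonempty.some
  have hmn : Fintype.card V ≤ G.edgeFinset.card := le_of_lt hm
  set h2 : ℂ[X] := Matrix.det ((NBAux.Hmat G).updateRow v₀
    (fun u => (X:ℂ[X]) + 1 - (G.degree u : ℂ[X]))) with hh2
  have hfac := NBAux.charpoly_nb_eq G hmn
  have hHfac := NBAux.det_Hmat_factor G v₀
  have hh2ne : eval 1 h2 ≠ 0 := by
    rw [hh2, NBAux.eval_one_det_updateRow]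
    exact NBAux.det_M2_ne_zero G hconn hm v₀
  have hh2ne0 : h2 ≠ 0 := fun h => hh2ne (by rw [h, eval_zero])
  have hX1ne : ((X:ℂ[X]) - 1) ≠ 0 := by
    intro h
    have := congrArg (eval 0) h
    simp at this
  have hXp1ne : ((X:ℂ[X]) + 1) ≠ 0 := by
    intro h
    have := congrArg (eval 0) h
    simp at this
  have hX2ne : ((X:ℂ[X])^2 - 1) ≠ 0 := by
    intro h
    have := congrArg (eval 0) h
    simp at this
  have hcharne : (nbMatrix G).charpoly ≠ 0 := (Matrix.charpoly_monic _).ne_zero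
  have hprodne : ((X:ℂ[X])^2-1)^(G.edgeFinset.card - Fintype.card V) * (((X:ℂ[X])-1) * h2) ≠ 0 := by
    rw [hh2, ← hHfac, ← hfac]
    exact hcharne
  have hmul2ne : (((X:ℂ[X])-1) * h2) ≠ 0 := mul_ne_zero hX1ne hh2ne0
  have e1 : rootMultiplicity (1:ℂ) ((X:ℂ[X])^2 - 1) = 1 := by
    have hX2 : ((X:ℂ[X])^2 - 1) = ((X:ℂ[X]) - 1) * ((X:ℂ[X]) + 1) := by ring
    rw [hX2, Polynomial.rootMultiplicity_mul (mul_ne_zero hX1ne hXp1ne)]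
    have ha : rootMultiplicity (1:ℂ) ((X:ℂ[X]) - 1) = 1 := by
      rw [show ((X:ℂ[X]) - 1) = X - C 1 by rw [Polynomial.C_1]]
      exact Polynomial.rootMultiplicity_X_sub_C_self
    have hb : rootMultiplicity (1:ℂ) ((X:ℂ[X]) + 1) = 0 := by
      apply Polynomial.rootMultiplicity_eq_zero
      simp [Polynomial.IsRoot]
    rw [ha, hb]
  have e2 : rootMultiplicity (1:ℂ) (((X:ℂ[X])-1) * h2) = 1 := by
    rw [Polynomial.rootMultiplicity_mul hmul2ne]
    have ha : rootMultiplicity (1:ℂ) ((X:ℂ[X]) - 1) = 1 := by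
      rw [show ((X:ℂ[X]) - 1) = X - C 1 by rw [Polynomial.C_1]]
      exact Polynomial.rootMultiplicity_X_sub_C_self
    have hb : rootMultiplicity (1:ℂ) h2 = 0 :=
      Polynomial.rootMultiplicity_eq_zero hh2ne
    rw [ha, hb]
  rw [show (nbMatrix G).charpoly
      = ((X:ℂ[X])^2-1)^(G.edgeFinset.card - Fintype.card V) * (((X:ℂ[X])-1) * h2) by
    rw [hfac, hHfac]]
  rw [Polynomial.rootMultiplicity_mul hprodne, NBAux.rootMultiplicity_pow' hX2ne 1 _, e1, e2]
  ring
end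

section
/- Let G be connected with m > n (i.e. G has at least two cycles). Then the geometric multiplicity of 1 as an eigenvalue of B equals m − n + 1, i.e. dim ker(B − I) = m − n + 1. -/
open Matrix Polynomial BigOperators

set_option linter.unusedSectionVars false

variable {V : Type*}

namespace NBProof

open SimpleGraph Finset

variable [DecidableEq V] [Fintype V] (G : SimpleGraph V) [DecidableRel G.Adj]

/-- symmetrization map -/
noncomputable def symL : (G.Dart → ℂ) →ₗ[ℂ] (G.Dart → ℂ) where
  toFun x := fun e => x e + x e.symm
  map_add' x y := by funext e; simp; ring
  map_smul' c x := by funext e; simp [mul_add]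

/-- incoming divergence -/
noncomputable def divL : (G.Dart → ℂ) →ₗ[ℂ] (V → ℂ) where
  toFun x := fun u => ∑ f : G.Dart, if f.snd = u then x f else 0
  map_add' x y := by
    funext u
    rw [Pi.add_apply, ← Finset.sum_add_distrib]
    refine Finset.sum_congr rfl fun f _ => ?_
    split <;> simp
  map_smul' c x := by
    funext u
    simp only [RingHom.id_apply, Pi.smul_apply, smul_eq_mul, Finset.mul_sum]
    refine Finset.sum_congr rfl fun f _ => ?_
    split <;> simp

lemma symm_eq_iff {d e : G.Dart} : d.symm = e ↔ d = e.symm := by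
  constructor <;> rintro rfl <;> simp [SimpleGraph.Dart.symm_symm]

lemma nb_mulVec (x : G.Dart → ℂ) (e : G.Dart) :
    (nbMatrix G).mulVec x e = divL G x e.fst - x e.symm := by
  have h1 : (nbMatrix G).mulVec x e
      = ∑ f : G.Dart, if f.snd = e.fst ∧ f.fst ≠ e.snd then x f else 0 := by
    simp only [Matrix.mulVec, dotProduct, nbMatrix, ite_mul, one_mul, zero_mul]
  have h2 : ∀ f : G.Dart, (if f.snd = e.fst then x f else 0)
      = (if f.snd = e.fst ∧ f.fst ≠ e.snd then x f else 0)
        + (if f = e.symm then x f else 0) := by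
    intro f
    by_cases hf : f = e.symm
    · subst hf
      have h3 : (e.symm.snd : V) = e.fst := rfl
      have h4 : (e.symm.fst : V) = e.snd := rfl
      simp [h3, h4]
    · have h5 : ¬(f.snd = e.fst ∧ f.fst = e.snd) := by
        rintro ⟨ha, hb⟩
        exact hf (SimpleGraph.Dart.ext _ _ (Prod.ext hb ha))
      by_cases hc : f.snd = e.fst
      · have : f.fst ≠ e.snd := fun hh => h5 ⟨hc, hh⟩
        simp [hc, this, hf]
      · simp [hc, hf]
  have h6 : divL G x e.fst = ((nbMatrix G).mulVec x e) + x e.symm := by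
    rw [h1]
    show (∑ f : G.Dart, if f.snd = e.fst then x f else 0) = _
    rw [Finset.sum_congr rfl fun f _ => h2 f, Finset.sum_add_distrib]
    congr 1
    rw [Finset.sum_ite_eq' Finset.univ e.symm x]
    simp
  rw [h6]; ring

lemma mem_ker_iff (x : G.Dart → ℂ) :
    x ∈ LinearMap.ker (nbMatrix G - 1).mulVecLin
      ↔ ∀ e : G.Dart, x e + x e.symm = divL G x e.fst := by
  rw [LinearMap.mem_ker]
  constructor
  · intro h e
    have := congrFun (congrArg (fun v => v) h) e
    simp only [mulVecLin_apply, sub_mulVec, one_mulVec, Pi.sub_apply, Pi.zero_apply] at this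
    rw [nb_mulVec] at this
    linear_combination -this
  · intro h
    funext e
    simp only [mulVecLin_apply, sub_mulVec, one_mulVec, Pi.sub_apply, Pi.zero_apply]
    rw [nb_mulVec]
    linear_combination - h e

lemma div_const {x : G.Dart → ℂ} (hx : ∀ e : G.Dart, x e + x e.symm = divL G x e.fst)
    {u w : V} (p : G.Walk u w) : divL G x u = divL G x w := by
  induction p with
  | nil => rfl
  | @cons a b c h q ih =>
    refine Eq.trans ?_ ih
    have h1 := hx ⟨(a, b), h⟩
    have h2 := hx (SimpleGraph.Dart.symm ⟨(a, b), h⟩)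
    rw [SimpleGraph.Dart.symm_symm] at h2
    have hfst : (SimpleGraph.Dart.symm ⟨(a, b), h⟩).fst = b := rfl
    rw [hfst] at h2
    have hfst2 : (SimpleGraph.Dart.mk (a, b) h).fst = a := rfl
    rw [hfst2] at h1
    linear_combination h2 - h1

lemma sum_div (x : G.Dart → ℂ) : ∑ u, divL G x u = ∑ f, x f := by
  show (∑ u, ∑ f : G.Dart, if f.snd = u then x f else 0) = _
  rw [Finset.sum_comm]
  refine Finset.sum_congr rfl fun f _ => ?_
  rw [Finset.sum_ite_eq Finset.univ f.snd (fun _ => x f)]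
  simp

lemma sum_symm (x : G.Dart → ℂ) : ∑ f : G.Dart, x f.symm = ∑ f, x f :=
  Fintype.sum_bijective SimpleGraph.Dart.symm
    (SimpleGraph.Dart.symm_involutive.bijective) _ _ (fun _ => rfl)

lemma ker_eq (hconn : G.Connected) (hm : Fintype.card V < G.edgeFinset.card) :
    LinearMap.ker (nbMatrix G - 1).mulVecLin
      = LinearMap.ker (symL G) ⊓ LinearMap.ker (divL G) := by
  ext x
  rw [mem_ker_iff, Submodule.mem_inf, LinearMap.mem_ker, LinearMap.mem_ker]
  constructor
  · intro hx
    obtain ⟨v₀⟩ := hconn.nonempty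
    have hc : ∀ u, divL G x u = divL G x v₀ := fun u =>
      div_const G hx ((hconn u v₀).some)
    set c := divL G x v₀ with hcdef
    have hs1 : ∑ u, divL G x u = (Fintype.card V : ℂ) * c := by
      rw [Finset.sum_congr rfl fun u _ => hc u]
      simp [Finset.card_univ, mul_comm]
    have hs2 : ∑ e : G.Dart, (x e + x e.symm) = 2 * ∑ f, x f := by
      rw [Finset.sum_add_distrib, sum_symm]; ring
    have hs3 : ∑ e : G.Dart, (x e + x e.symm) = (Fintype.card G.Dart : ℂ) * c := by
      rw [Finset.sum_congr rfl fun e _ => (hx e).trans (hc e.fst)]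
      simp [Finset.card_univ, mul_comm]
    have hcard := G.dart_card_eq_twice_card_edges
    have hsum := sum_div G x
    have hc0 : c = 0 := by
      have key : (2 * (G.edgeFinset.card : ℂ)) * c = 2 * ((Fintype.card V : ℂ) * c) := by
        have := hs3
        rw [hcard] at this
        push_cast at this
        rw [hs2, ← hsum, hs1] at this
        linear_combination -this
      have hne : (G.edgeFinset.card : ℂ) ≠ (Fintype.card V : ℂ) := by
        exact_mod_cast Nat.ne_of_gt hm
      have : ((G.edgeFinset.card : ℂ) - (Fintype.card V : ℂ)) * (2 * c) = 0 := by linear_combination key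
      rcases mul_eq_zero.mp this with h | h
      · exact absurd (sub_eq_zero.mp h) hne
      · linear_combination h / 2
    constructor
    · funext e
      show x e + x e.symm = 0
      rw [hx e, hc e.fst, hc0]
    · funext u
      show divL G x u = 0
      rw [hc u, hc0]
  · rintro ⟨h1, h2⟩ e
    have ha : x e + x e.symm = 0 := congrFun h1 e
    have hb : divL G x e.fst = 0 := congrFun h2 e.fst
    rw [ha, hb]


section Dim

lemma exists_dart (s : G.edgeSet) : ∃ d : G.Dart, d.edge = (s : Sym2 V) := by
  obtain ⟨s, hs⟩ := s
  induction s using Sym2.ind with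
  | _ a b => exact ⟨⟨(a, b), (G.mem_edgeSet).mp hs⟩, rfl⟩

noncomputable def orient (s : G.edgeSet) : G.Dart := (exists_dart G s).choose

lemma orient_edge (s : G.edgeSet) : (orient G s).edge = (s : Sym2 V) :=
  (exists_dart G s).choose_spec

def dartEdge (d : G.Dart) : G.edgeSet := ⟨d.edge, d.edge_mem⟩

lemma dartEdge_symm (d : G.Dart) : dartEdge G d.symm = dartEdge G d :=
  Subtype.ext d.edge_symm

lemma orient_cases (d : G.Dart) :
    orient G (dartEdge G d) = d ∨ orient G (dartEdge G d) = d.symm := by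
  have h := orient_edge G (dartEdge G d)
  exact SimpleGraph.dart_edge_eq_iff _ _ |>.mp h

noncomputable def sgn (d : G.Dart) : ℂ := if orient G (dartEdge G d) = d then 1 else -1

lemma sgn_symm (d : G.Dart) : sgn G d.symm = - sgn G d := by
  unfold sgn
  rw [dartEdge_symm]
  rcases orient_cases G d with h | h
  · have h2 : orient G (dartEdge G d) ≠ d.symm := by
      rw [h]; exact fun hh => d.symm_ne hh.symm
    rw [if_neg h2, if_pos h]
  · have h2 : orient G (dartEdge G d) ≠ d := by
      rw [h]; exact d.symm_ne
    rw [if_pos h, if_neg h2]; norm_num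

lemma mem_ker_symL {x : G.Dart → ℂ} (hx : x ∈ LinearMap.ker (symL G)) (e : G.Dart) :
    x e.symm = - x e := by
  have h : x e + x e.symm = 0 := congrFun (LinearMap.mem_ker.mp hx) e
  linear_combination h

noncomputable def AtoE : ↥(LinearMap.ker (symL G)) →ₗ[ℂ] (G.edgeSet → ℂ) where
  toFun x := fun s => (x : G.Dart → ℂ) (orient G s)
  map_add' x y := rfl
  map_smul' c x := rfl

noncomputable def EtoA : (G.edgeSet → ℂ) →ₗ[ℂ] ↥(LinearMap.ker (symL G)) where
  toFun y := ⟨fun d => sgn G d * y (dartEdge G d), by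
    rw [LinearMap.mem_ker]
    funext e
    show sgn G e * y (dartEdge G e) + sgn G e.symm * y (dartEdge G e.symm) = 0
    rw [sgn_symm, dartEdge_symm]; ring⟩
  map_add' y z := by
    apply Subtype.ext; funext d
    show sgn G d * (y (dartEdge G d) + z (dartEdge G d)) = _
    show _ = sgn G d * y (dartEdge G d) + sgn G d * z (dartEdge G d)
    ring
  map_smul' c y := by
    apply Subtype.ext; funext d
    show sgn G d * (c * y (dartEdge G d)) = c * (sgn G d * y (dartEdge G d))
    ring

noncomputable def AEquiv : ↥(LinearMap.ker (symL G)) ≃ₗ[ℂ] (G.edgeSet → ℂ) :=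
  LinearEquiv.ofLinear (AtoE G) (EtoA G)
    (by
      apply LinearMap.ext; intro y; funext s
      show sgn G (orient G s) * y (dartEdge G (orient G s)) = y s
      have h1 : dartEdge G (orient G s) = s := Subtype.ext (orient_edge G s)
      rw [h1]
      unfold sgn
      rw [h1, if_pos rfl, one_mul])
    (by
      apply LinearMap.ext; intro x; apply Subtype.ext; funext d
      show sgn G d * (x : G.Dart → ℂ) (orient G (dartEdge G d)) = (x : G.Dart → ℂ) d
      rcases orient_cases G d with h | h
      · unfold sgn; rw [if_pos h, h, one_mul]
      · have h2 : orient G (dartEdge G d) ≠ d := by rw [h]; exact d.symm_ne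
        unfold sgn
        rw [if_neg h2, h, mem_ker_symL G x.2 d]
        ring)

lemma finrank_A :
    Module.finrank ℂ ↥(LinearMap.ker (symL G)) = G.edgeFinset.card := by
  rw [(AEquiv G).finrank_eq, Module.finrank_pi]
  exact (Set.toFinset_card _).symm

noncomputable def sumL (V : Type*) [Fintype V] : (V → ℂ) →ₗ[ℂ] ℂ where
  toFun f := ∑ u, f u
  map_add' f g := by simp [Finset.sum_add_distrib]
  map_smul' c f := by simp [Finset.mul_sum]

noncomputable def flow {a b : V} (h : G.Adj a b) : G.Dart → ℂ :=
  Pi.single (SimpleGraph.Dart.mk (a, b) h) 1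
    + Pi.single (SimpleGraph.Dart.mk (a, b) h).symm (-1)

lemma single_pair_mem (d : G.Dart) :
    (Pi.single d 1 + Pi.single d.symm (-1) : G.Dart → ℂ) ∈ LinearMap.ker (symL G) := by
  rw [LinearMap.mem_ker]
  funext e
  show (Pi.single d 1 + Pi.single d.symm (-1) : G.Dart → ℂ) e
      + (Pi.single d 1 + Pi.single d.symm (-1) : G.Dart → ℂ) e.symm = 0
  have hdd : d ≠ d.symm := fun hh => d.symm_ne hh.symm
  simp only [Pi.add_apply]
  rcases eq_or_ne e d with rfl | he1
  · have hne : e ≠ e.symm := fun hh => e.symm_ne hh.symm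
    simp [Pi.single_apply, hne, e.symm_ne]
  · rcases eq_or_ne e d.symm with rfl | he2
    · simp [Pi.single_apply, SimpleGraph.Dart.symm_symm, d.symm_ne, hdd]
    · have he3 : e.symm ≠ d := by
        intro hh
        exact he2 (by rw [← hh, SimpleGraph.Dart.symm_symm])
      have he4 : e.symm ≠ d.symm := by
        intro hh
        exact he1 (by
          have := congrArg SimpleGraph.Dart.symm hh
          rwa [SimpleGraph.Dart.symm_symm, SimpleGraph.Dart.symm_symm] at this)
      simp [Pi.single_apply, he1, he2, he3, he4]

lemma flow_mem {a b : V} (h : G.Adj a b) : flow G h ∈ LinearMap.ker (symL G) :=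
  single_pair_mem G (SimpleGraph.Dart.mk (a, b) h)

lemma divL_single (d : G.Dart) (c : ℂ) :
    divL G (Pi.single d c) = Pi.single d.snd c := by
  funext u
  show (∑ f : G.Dart, if f.snd = u then Pi.single d c f else 0) = _
  rw [Finset.sum_eq_single d]
  · simp [Pi.single_apply, eq_comm]
  · intro f _ hf
    simp [Pi.single_eq_of_ne hf]
  · intro hd; exact absurd (Finset.mem_univ d) hd

lemma divL_flow {a b : V} (h : G.Adj a b) :
    divL G (flow G h) = Pi.single b (1 : ℂ) - Pi.single a 1 := by
  have hrw : flow G h = Pi.single (SimpleGraph.Dart.mk (a, b) h) 1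
      + Pi.single (SimpleGraph.Dart.mk (a, b) h).symm (-1) := rfl
  rw [hrw, map_add, divL_single, divL_single]
  have h1 : (SimpleGraph.Dart.mk (a, b) h).snd = b := rfl
  have h2 : (SimpleGraph.Dart.mk (a, b) h).symm.snd = a := rfl
  rw [h1, h2]
  funext u
  simp only [Pi.add_apply, Pi.sub_apply, Pi.single_apply]
  split_ifs <;> ring

noncomputable def D : ↥(LinearMap.ker (symL G)) →ₗ[ℂ] (V → ℂ) :=
  (divL G).domRestrict (LinearMap.ker (symL G))

lemma range_D (hconn : G.Connected) :
    LinearMap.range (D G) = LinearMap.ker (sumL V) := by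
  apply le_antisymm
  · rintro _ ⟨x, rfl⟩
    rw [LinearMap.mem_ker]
    show ∑ u, divL G (x : G.Dart → ℂ) u = 0
    rw [sum_div]
    have h : ∑ f : G.Dart, (x : G.Dart → ℂ) f = - ∑ f : G.Dart, (x : G.Dart → ℂ) f := by
      conv_lhs => rw [← sum_symm]
      rw [← Finset.sum_neg_distrib]
      exact Finset.sum_congr rfl fun f _ => mem_ker_symL G x.2 f
    linear_combination h / 2
  · intro f hf
    have key : ∀ a b : V, (Pi.single b (1 : ℂ) - Pi.single a 1) ∈ LinearMap.range (D G) := by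
      intro a b
      have p : G.Walk a b := (hconn a b).some
      induction p with
      | nil => rw [sub_self]; exact Submodule.zero_mem _
      | @cons a c b h q ih =>
        have hD : D G ⟨flow G h, flow_mem G h⟩ = Pi.single c (1 : ℂ) - Pi.single a 1 :=
          divL_flow G h
        have hsplit : (Pi.single b (1 : ℂ) - Pi.single a 1 : V → ℂ)
            = (Pi.single b 1 - Pi.single c 1) + (Pi.single c 1 - Pi.single a 1) := by
          abel
        rw [hsplit]
        exact Submodule.add_mem _ ih ⟨_, hD⟩
    obtain ⟨v₀⟩ := hconn.nonempty
    have hf' : ∑ u, f u = 0 := LinearMap.mem_ker.mp hf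
    have hrep : f = ∑ u, f u • (Pi.single u (1 : ℂ) - Pi.single v₀ 1) := by
      funext w
      rw [Finset.sum_apply]
      have hterm : ∀ u : V, ((f u • (Pi.single u (1 : ℂ) - Pi.single v₀ 1) : V → ℂ)) w
          = (if w = u then f u else 0) - f u * (if w = v₀ then 1 else 0) := by
        intro u
        simp only [Pi.smul_apply, Pi.sub_apply, Pi.single_apply, smul_eq_mul]
        split_ifs <;> ring
      rw [Finset.sum_congr rfl fun u _ => hterm u, Finset.sum_sub_distrib]
      rw [Finset.sum_ite_eq Finset.univ w f]
      by_cases hw : w = v₀ <;> simp [hw, hf']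
    rw [hrep]
    exact Submodule.sum_mem _ fun u _ => Submodule.smul_mem _ _ (key v₀ u)

end Dim

end NBProof

set_option synthInstance.maxHeartbeats 1000000 in
set_option maxHeartbeats 2000000 in
/-- For a connected graph with `m > n`, the geometric multiplicity of `1`
as an eigenvalue of `B` is `m − n + 1`, i.e. `dim ker(B − I) = m − n + 1`. -/
theorem nbMatrix_geometric_multiplicity_one
    [DecidableEq V] [Fintype V] (G : SimpleGraph V) [DecidableRel G.Adj]
    (hconn : G.Connected) (hm : Fintype.card V < G.edgeFinset.card) :
    Module.finrank ℂ ↥(LinearMap.ker (nbMatrix G - 1).mulVecLin)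
      = G.edgeFinset.card - Fintype.card V + 1 := by
  classical
  have hV : Nonempty V := hconn.nonempty
  rw [NBProof.ker_eq G hconn hm]
  set A := LinearMap.ker (NBProof.symL G) with hA
  have hkerD : LinearMap.ker (NBProof.D G)
      = Submodule.comap A.subtype (LinearMap.ker (NBProof.divL G)) :=
    LinearMap.ker_domRestrict _ _
  have e1 : Submodule.map A.subtype (LinearMap.ker (NBProof.D G))
      = A ⊓ LinearMap.ker (NBProof.divL G) := by
    rw [hkerD, Submodule.map_comap_subtype]
  have e2 : Module.finrank ℂ ↥(A ⊓ LinearMap.ker (NBProof.divL G))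
      = Module.finrank ℂ ↥(LinearMap.ker (NBProof.D G)) := by
    rw [← e1]
    exact ((Submodule.equivSubtypeMap A (LinearMap.ker (NBProof.D G))).finrank_eq).symm
  have rn1 := LinearMap.finrank_range_add_finrank_ker (NBProof.D G)
  have hfA : Module.finrank ℂ ↥A = G.edgeFinset.card := NBProof.finrank_A G
  have hsurj : Function.Surjective (NBProof.sumL V) := by
    intro c
    obtain ⟨v₀⟩ := hV
    refine ⟨Pi.single v₀ c, ?_⟩
    show (∑ u, Pi.single v₀ c u) = c
    simp [Pi.single_apply]
  have rn2 := LinearMap.finrank_range_add_finrank_ker (NBProof.sumL V)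
  rw [LinearMap.range_eq_top.mpr hsurj, finrank_top] at rn2
  have hfc : Module.finrank ℂ ℂ = 1 := Module.finrank_self ℂ
  have hpi : Module.finrank ℂ (V → ℂ) = Fintype.card V := Module.finrank_pi ℂ
  rw [hfc, hpi] at rn2
  have hrange : LinearMap.range (NBProof.D G) = LinearMap.ker (NBProof.sumL V) :=
    NBProof.range_D G hconn
  rw [hrange, hfA] at rn1
  rw [e2]
  have hn1 : 0 < Fintype.card V := Fintype.card_pos
  omega
end

section
/- Let G be connected with m > n (i.e. G has at least two cycles). Then the geometric multiplicity of −1 as an eigenvalue of B, i.e. dim ker(B + I), equals m − n + 1 if G is bipartite, and equals m − n if G is not bipartite. -/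
open Matrix Polynomial BigOperators

variable {V : Type*}

/-- `G` is bipartite: the vertex set can be partitioned into two sets such that every edge
joins a vertex of one set to a vertex of the other. -/
def IsBipartite (G : SimpleGraph V) : Prop :=
  ∃ S : Set V, ∀ a b : V, G.Adj a b → ((a ∈ S ∧ b ∉ S) ∨ (a ∉ S ∧ b ∈ S))

set_option linter.unusedSectionVars false
set_option linter.unusedVariables false

section Aux

variable [DecidableEq V] [Fintype V] (G : SimpleGraph V) [DecidableRel G.Adj]

/-- sum of `x` over darts pointing into `u`. -/
noncomputable def dartSum (x : G.Dart → ℂ) (u : V) : ℂ :=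
  ∑ f ∈ Finset.univ.filter (fun f : G.Dart => f.snd = u), x f

/-- Unsigned incidence matrix indexed by vertices and edges. -/
noncomputable def incMat : Matrix V G.edgeFinset ℂ :=
  fun u e => if u ∈ (e : Sym2 V) then 1 else 0

lemma connected_induction (hconn : G.Connected) (P : V → Prop) (u0 : V) (h0 : P u0)
    (step : ∀ a b, G.Adj a b → P a → P b) : ∀ u, P u := by
  have key : ∀ a b : V, G.Walk a b → P a → P b := by
    intro a b w
    induction w with
    | nil => exact id
    | cons h _ ih => exact fun ha => ih (step _ _ h ha)
  intro u
  obtain ⟨w⟩ := hconn u0 u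
  exact key _ _ w h0

lemma exists_dart_edge (e : Sym2 V) (he : e ∈ G.edgeSet) : ∃ d : G.Dart, d.edge = e := by
  induction e with
  | _ a b => exact ⟨⟨(a, b), he⟩, rfl⟩

/-- A choice of dart for each edge. -/
noncomputable def sec (e : G.edgeFinset) : G.Dart :=
  (exists_dart_edge G e (SimpleGraph.mem_edgeFinset.mp e.2)).choose

lemma sec_edge (e : G.edgeFinset) : (sec G e).edge = (e : Sym2 V) :=
  (exists_dart_edge G e (SimpleGraph.mem_edgeFinset.mp e.2)).choose_spec

lemma dart_edge_mem_edgeFinset (f : G.Dart) : f.edge ∈ G.edgeFinset :=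
  SimpleGraph.mem_edgeFinset.mpr f.edge_mem

/-- converting sums over darts into `u` to sums over edges containing `u`. -/
lemma sum_darts_eq_sum_edges (z : G.edgeFinset → ℂ) (u : V) :
    ∑ f ∈ Finset.univ.filter (fun f : G.Dart => f.snd = u),
        z ⟨f.edge, dart_edge_mem_edgeFinset G f⟩
      = ∑ e ∈ Finset.univ.filter (fun e : G.edgeFinset => u ∈ (e : Sym2 V)), z e := by
  refine Finset.sum_bij (fun f _ => (⟨f.edge, dart_edge_mem_edgeFinset G f⟩ : G.edgeFinset))
    ?_ ?_ ?_ ?_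
  · intro f hf
    simp only [Finset.mem_filter, Finset.mem_univ, true_and] at hf ⊢
    rw [show f.edge = s(f.fst, f.snd) from rfl, Sym2.mem_iff]
    exact Or.inr hf.symm
  · intro f1 h1 f2 h2 h
    simp only [Finset.mem_filter, Finset.mem_univ, true_and] at h1 h2
    have := Subtype.mk_eq_mk.mp h
    rcases (SimpleGraph.dart_edge_eq_iff f1 f2).mp this with h' | h'
    · exact h'
    · exfalso
      have : f2.fst = u := by rw [← h1, h']; rfl
      exact f2.fst_ne_snd (this.trans h2.symm)
  · intro e he
    simp only [Finset.mem_filter, Finset.mem_univ, true_and] at he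
    obtain ⟨b, hb⟩ := Sym2.mem_iff_exists.mp he
    have hadj : G.Adj u b := by
      have := SimpleGraph.mem_edgeFinset.mp e.2
      rwa [hb, SimpleGraph.mem_edgeSet] at this
    refine ⟨⟨(b, u), hadj.symm⟩, by simp, ?_⟩
    apply Subtype.ext
    simp only
    rw [show (SimpleGraph.Dart.mk (b, u) hadj.symm).edge = s(b, u) from rfl, hb, Sym2.eq_swap]
  · intro f hf; rfl

/-- the filter of vertices in an edge `s(a,b)` with `a ≠ b` is `{a, b}`. -/
lemma filter_mem_pair {a b : V} (hab : a ≠ b) :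
    Finset.univ.filter (fun u : V => u ∈ (s(a, b) : Sym2 V)) = {a, b} := by
  ext u
  simp [Sym2.mem_iff]

lemma transpose_mulVec_incMat (g : V → ℂ) (a b : V) (hadj : G.Adj a b) :
    (incMat G)ᵀ.mulVec g ⟨s(a, b), SimpleGraph.mem_edgeFinset.mpr hadj⟩ = g a + g b := by
  have h1 : (incMat G)ᵀ.mulVec g ⟨s(a, b), SimpleGraph.mem_edgeFinset.mpr hadj⟩
      = ∑ u : V, (if u ∈ (s(a, b) : Sym2 V) then (1 : ℂ) else 0) * g u := by
    simp only [Matrix.mulVec, dotProduct, Matrix.transpose_apply, incMat]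
  have h2 : ∀ u : V, (if u ∈ (s(a, b) : Sym2 V) then (1 : ℂ) else 0) * g u
      = if u ∈ (s(a, b) : Sym2 V) then g u else 0 := by
    intro u; split_ifs <;> ring
  rw [h1]
  rw [Finset.sum_congr rfl (fun u (_ : u ∈ Finset.univ) => h2 u), ← Finset.sum_filter,
    filter_mem_pair hadj.ne, Finset.sum_pair hadj.ne]

lemma mem_ker_transpose_iff (g : V → ℂ) :
    g ∈ LinearMap.ker (incMat G)ᵀ.mulVecLin ↔ ∀ a b, G.Adj a b → g a + g b = 0 := by
  rw [LinearMap.mem_ker]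
  constructor
  · intro h a b hadj
    have := congrFun h ⟨s(a, b), SimpleGraph.mem_edgeFinset.mpr hadj⟩
    rw [Matrix.mulVecLin_apply] at this
    rw [← transpose_mulVec_incMat G g a b hadj]
    exact this
  · intro h
    funext e
    obtain ⟨s, hs⟩ := e
    induction s with
    | _ a b =>
      have hadj : G.Adj a b := SimpleGraph.mem_edgeFinset.mp hs
      show (incMat G)ᵀ.mulVec g ⟨s(a, b), hs⟩ = 0
      rw [transpose_mulVec_incMat G g a b hadj]
      exact h a b hadj

lemma mulVec_incMat (z : G.edgeFinset → ℂ) (u : V) :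
    (incMat G).mulVec z u
      = ∑ e ∈ Finset.univ.filter (fun e : G.edgeFinset => u ∈ (e : Sym2 V)), z e := by
  have h1 : (incMat G).mulVec z u
      = ∑ e : G.edgeFinset, (if u ∈ (e : Sym2 V) then (1 : ℂ) else 0) * z e := by
    simp only [Matrix.mulVec, dotProduct, incMat]
  have h2 : ∀ e : G.edgeFinset, (if u ∈ (e : Sym2 V) then (1 : ℂ) else 0) * z e
      = if u ∈ (e : Sym2 V) then z e else 0 := by
    intro e; split_ifs <;> ring
  rw [h1, Finset.sum_congr rfl (fun e (_ : e ∈ Finset.univ) => h2 e), ← Finset.sum_filter]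

lemma filter_eq_erase (e : G.Dart) :
    Finset.univ.filter (fun f : G.Dart => f.snd = e.fst ∧ f.fst ≠ e.snd)
      = (Finset.univ.filter (fun f : G.Dart => f.snd = e.fst)).erase e.symm := by
  ext f
  simp only [Finset.mem_filter, Finset.mem_univ, true_and, Finset.mem_erase]
  constructor
  · rintro ⟨h1, h2⟩
    exact ⟨fun hf => h2 (by rw [hf]; rfl), h1⟩
  · rintro ⟨h1, h2⟩
    refine ⟨h2, fun hf => h1 ?_⟩
    ext
    · exact hf
    · exact h2

lemma entry_eq (x : G.Dart → ℂ) (e : G.Dart) :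
    ((nbMatrix G + 1) *ᵥ x) e = x e + (dartSum G x e.fst - x e.symm) := by
  have h0 : ((nbMatrix G + 1) *ᵥ x) e
      = ∑ f : G.Dart, ((if f.snd = e.fst ∧ f.fst ≠ e.snd then (1 : ℂ) else 0)
          + if e = f then 1 else 0) * x f := by
    simp only [Matrix.mulVec, dotProduct, Matrix.add_apply, Matrix.one_apply, nbMatrix]
  have h1 : ∀ f : G.Dart, ((if f.snd = e.fst ∧ f.fst ≠ e.snd then (1 : ℂ) else 0)
        + if e = f then 1 else 0) * x f
      = (if f.snd = e.fst ∧ f.fst ≠ e.snd then x f else 0) + (if e = f then x f else 0) := by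
    intro f; split_ifs <;> ring
  rw [h0, Finset.sum_congr rfl (fun f (_ : f ∈ Finset.univ) => h1 f), Finset.sum_add_distrib,
    ← Finset.sum_filter, Finset.sum_ite_eq]
  simp only [Finset.mem_univ, if_true]
  rw [filter_eq_erase G e, Finset.sum_erase_eq_sub (by simp :
    e.symm ∈ Finset.univ.filter (fun f : G.Dart => f.snd = e.fst))]
  show dartSum G x e.fst - x e.symm + x e = _
  ring

/-- Membership in the kernel of `B + 1`, rewritten. -/
lemma mem_ker_iff' (x : G.Dart → ℂ) :
    x ∈ LinearMap.ker (nbMatrix G + 1).mulVecLin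
      ↔ ∀ e : G.Dart, x e + (dartSum G x e.fst - x e.symm) = 0 := by
  rw [LinearMap.mem_ker]
  constructor
  · intro h e
    have := congrFun h e
    rw [Matrix.mulVecLin_apply, entry_eq G x e] at this
    exact this
  · intro h
    funext e
    rw [Matrix.mulVecLin_apply, entry_eq G x e]
    exact h e

/-- Main characterization: under connectedness and `m ≠ n`, kernel elements are symmetric
with vanishing vertex sums. -/
lemma mem_ker_char (hconn : G.Connected) (hm : Fintype.card V ≠ G.edgeFinset.card)
    (x : G.Dart → ℂ) :
    x ∈ LinearMap.ker (nbMatrix G + 1).mulVecLin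
      ↔ (∀ f : G.Dart, x f.symm = x f) ∧ (∀ u : V, dartSum G x u = 0) := by
  rw [mem_ker_iff' G x]
  constructor
  · intro h
    have condEq : ∀ e : G.Dart, x e - x e.symm = - dartSum G x e.fst := by
      intro e
      linear_combination h e
    have stepS : ∀ a b, G.Adj a b → dartSum G x a + dartSum G x b = 0 := by
      intro a b hadj
      have h1 : x (⟨(a, b), hadj⟩ : G.Dart) - x (⟨(a, b), hadj⟩ : G.Dart).symm
          = - dartSum G x a := condEq ⟨(a, b), hadj⟩
      have h2 : x (⟨(a, b), hadj⟩ : G.Dart).symm - x (⟨(a, b), hadj⟩ : G.Dart)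
          = - dartSum G x b := condEq (⟨(a, b), hadj⟩ : G.Dart).symm
      linear_combination h1 + h2
    have hS0 : ∀ u : V, dartSum G x u = 0 := by
      by_contra hc
      push_neg at hc
      obtain ⟨u0, hu0⟩ := hc
      set s : ℂ := dartSum G x u0 with hs
      have hpm : ∀ u, dartSum G x u = s ∨ dartSum G x u = -s := by
        refine connected_induction G hconn
          (fun u => dartSum G x u = s ∨ dartSum G x u = -s) u0 (Or.inl hs.symm) ?_
        intro a b hadj hpa
        have hab := stepS a b hadj
        rcases hpa with h' | h'
        · right; linear_combination hab - h'
        · left; linear_combination hab - h'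
      set ε : V → ℂ := fun u => dartSum G x u / s with hε
      have hεpm : ∀ u, ε u = 1 ∨ ε u = -1 := by
        intro u
        rcases hpm u with h' | h'
        · left; show dartSum G x u / s = 1; rw [h', div_self hu0]
        · right; show dartSum G x u / s = -1; rw [h', neg_div, div_self hu0]
      have hεsq : ∀ u, ε u * ε u = 1 := by
        intro u; rcases hεpm u with h' | h' <;> rw [h'] <;> ring
      have hSε : ∀ u, dartSum G x u = s * ε u := by
        intro u; show dartSum G x u = s * (dartSum G x u / s); field_simp
      have hεadj : ∀ a b, G.Adj a b → ε a = - ε b := by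
        intro a b hadj
        have hab := stepS a b hadj
        rw [hSε a, hSε b] at hab
        have h2 : ε a + ε b = 0 := by
          rcases mul_eq_zero.mp (by linear_combination hab : s * (ε a + ε b) = 0) with h' | h'
          · exact absurd h' hu0
          · exact h'
        linear_combination h2
      -- the total sum T
      have hTa : (∑ f : G.Dart, ε f.snd * x f) = s * (Fintype.card V : ℂ) := by
        have hfib : ∑ u : V, (∑ f ∈ Finset.univ.filter (fun f : G.Dart => f.snd = u),
            ε f.snd * x f) = ∑ f : G.Dart, ε f.snd * x f :=
          Finset.sum_fiberwise Finset.univ (fun f : G.Dart => f.snd)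
            (fun f : G.Dart => ε f.snd * x f)
        have hinner : ∀ u : V, (∑ f ∈ Finset.univ.filter (fun f : G.Dart => f.snd = u),
            ε f.snd * x f) = s := by
          intro u
          have e1 : (∑ f ∈ Finset.univ.filter (fun f : G.Dart => f.snd = u),
              ε f.snd * x f) = ε u * dartSum G x u := by
            rw [dartSum, Finset.mul_sum]
            apply Finset.sum_congr rfl
            intro f hf
            simp only [Finset.mem_filter, Finset.mem_univ, true_and] at hf
            rw [hf]
          rw [e1, hSε u, mul_comm s (ε u), ← mul_assoc, hεsq u, one_mul]
        calc (∑ f : G.Dart, ε f.snd * x f)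
            = ∑ u : V, (∑ f ∈ Finset.univ.filter (fun f : G.Dart => f.snd = u),
                ε f.snd * x f) := hfib.symm
          _ = ∑ _u : V, s := Finset.sum_congr rfl (fun u _ => hinner u)
          _ = s * (Fintype.card V : ℂ) := by
              rw [Finset.sum_const, Finset.card_univ, nsmul_eq_mul]; ring
      have hTb : (∑ f : G.Dart, ε f.snd * x f) = s * (G.edgeFinset.card : ℂ) := by
        have hx' : ∀ f : G.Dart, x f = x f.symm - s * ε f.fst := by
          intro f
          have h1 := condEq f
          rw [hSε f.fst] at h1
          linear_combination h1
        have e1 : (∑ f : G.Dart, ε f.snd * x f)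
            = (∑ f : G.Dart, ε f.snd * x f.symm) - s * ∑ f : G.Dart, ε f.snd * ε f.fst := by
          rw [Finset.mul_sum, ← Finset.sum_sub_distrib]
          apply Finset.sum_congr rfl
          intro f _
          rw [hx' f]; ring
        have e2 : (∑ f : G.Dart, ε f.snd * x f.symm) = ∑ f : G.Dart, ε f.fst * x f := by
          exact Equiv.sum_comp (Function.Involutive.toPerm _ SimpleGraph.Dart.symm_involutive)
            (fun d : G.Dart => ε d.fst * x d)
        have e3 : ∀ f : G.Dart, ε f.fst * x f = - (ε f.snd * x f) := by
          intro f
          rw [hεadj f.fst f.snd f.adj]; ring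
        have esymm : (∑ f : G.Dart, ε f.snd * x f.symm) = - ∑ f : G.Dart, ε f.snd * x f := by
          calc (∑ f : G.Dart, ε f.snd * x f.symm)
              = ∑ f : G.Dart, ε f.fst * x f := e2
            _ = ∑ f : G.Dart, - (ε f.snd * x f) := Finset.sum_congr rfl (fun f _ => e3 f)
            _ = - ∑ f : G.Dart, ε f.snd * x f := by rw [Finset.sum_neg_distrib]
        have e4 : ∀ f : G.Dart, ε f.snd * ε f.fst = -1 := by
          intro f
          rw [hεadj f.fst f.snd f.adj]
          have := hεsq f.snd
          linear_combination - this
        have e5 : (∑ f : G.Dart, ε f.snd * ε f.fst) = - (2 * (G.edgeFinset.card : ℂ)) := by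
          calc (∑ f : G.Dart, ε f.snd * ε f.fst)
              = ∑ _f : G.Dart, (-1 : ℂ) := Finset.sum_congr rfl (fun f _ => e4 f)
            _ = - (Fintype.card G.Dart : ℂ) := by
                rw [Finset.sum_const, Finset.card_univ, nsmul_eq_mul]; ring
            _ = - (2 * (G.edgeFinset.card : ℂ)) := by
                rw [SimpleGraph.dart_card_eq_twice_card_edges]; push_cast; ring
        linear_combination (e1 + esymm - s * e5) / 2
      have hkey : s * ((Fintype.card V : ℂ) - (G.edgeFinset.card : ℂ)) = 0 := by
        linear_combination hTb - hTa
      rcases mul_eq_zero.mp hkey with h' | h'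
      · exact hu0 h'
      · apply hm
        have : (Fintype.card V : ℂ) = (G.edgeFinset.card : ℂ) := by linear_combination h'
        exact_mod_cast this
    refine ⟨?_, hS0⟩
    intro f
    have h1 := condEq f
    rw [hS0 f.fst] at h1
    linear_combination - h1
  · rintro ⟨hsym, hS⟩ e
    rw [hS e.fst, hsym e]
    ring

/-- The linear equivalence between `ker (B+1)` and the kernel of the incidence matrix. -/
noncomputable def kerEquiv (hconn : G.Connected) (hm : Fintype.card V ≠ G.edgeFinset.card) :
    (LinearMap.ker (nbMatrix G + 1).mulVecLin) ≃ₗ[ℂ] (LinearMap.ker (incMat G).mulVecLin) where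
  toFun x := ⟨fun e => x.1 (sec G e), by
    rw [LinearMap.mem_ker]
    funext u
    obtain ⟨hsym, hS⟩ := (mem_ker_char G hconn hm x.1).mp x.2
    have h2 : ∀ f : G.Dart, x.1 (sec G ⟨f.edge, dart_edge_mem_edgeFinset G f⟩) = x.1 f := by
      intro f
      have h1 := sec_edge G ⟨f.edge, dart_edge_mem_edgeFinset G f⟩
      rcases (SimpleGraph.dart_edge_eq_iff _ _).mp h1 with h' | h'
      · rw [h']
      · rw [h', hsym]
    show (incMat G).mulVec (fun e => x.1 (sec G e)) u = 0
    calc (incMat G).mulVec (fun e => x.1 (sec G e)) u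
        = ∑ e ∈ Finset.univ.filter (fun e : G.edgeFinset => u ∈ (e : Sym2 V)),
            x.1 (sec G e) := mulVec_incMat G _ u
      _ = ∑ f ∈ Finset.univ.filter (fun f : G.Dart => f.snd = u),
            x.1 (sec G ⟨f.edge, dart_edge_mem_edgeFinset G f⟩) :=
          (sum_darts_eq_sum_edges G (fun e => x.1 (sec G e)) u).symm
      _ = ∑ f ∈ Finset.univ.filter (fun f : G.Dart => f.snd = u), x.1 f :=
          Finset.sum_congr rfl (fun f _ => h2 f)
      _ = 0 := hS u⟩
  map_add' x y := Subtype.ext (funext fun e => rfl)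
  map_smul' c x := Subtype.ext (funext fun e => rfl)
  invFun z := ⟨fun f => z.1 ⟨f.edge, dart_edge_mem_edgeFinset G f⟩, by
    rw [mem_ker_char G hconn hm]
    constructor
    · exact fun f => congrArg z.1 (Subtype.ext f.edge_symm)
    · intro u
      have h1 := sum_darts_eq_sum_edges G (fun e => z.1 e) u
      have h2 : (incMat G).mulVec z.1 u = 0 := by
        have hz := z.2
        rw [LinearMap.mem_ker] at hz
        exact congrFun hz u
      rw [mulVec_incMat] at h2
      exact h1.trans h2⟩
  left_inv x := by
    apply Subtype.ext
    funext f
    obtain ⟨hsym, _⟩ := (mem_ker_char G hconn hm x.1).mp x.2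
    show x.1 (sec G ⟨f.edge, dart_edge_mem_edgeFinset G f⟩) = x.1 f
    have h1 := sec_edge G ⟨f.edge, dart_edge_mem_edgeFinset G f⟩
    rcases (SimpleGraph.dart_edge_eq_iff _ _).mp h1 with h' | h'
    · rw [h']
    · rw [h', hsym]
  right_inv z := by
    apply Subtype.ext
    funext e
    exact congrArg z.1 (Subtype.ext (sec_edge G e))

lemma ker_transpose_bot (hconn : G.Connected) (hnb : ¬ IsBipartite G) :
    LinearMap.ker (incMat G)ᵀ.mulVecLin = ⊥ := by
  rw [eq_bot_iff]
  intro g hg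
  rw [mem_ker_transpose_iff] at hg
  simp only [Submodule.mem_bot]
  by_contra hgne
  obtain ⟨u0, hu0⟩ : ∃ u, g u ≠ 0 := by
    by_contra hc
    push_neg at hc
    exact hgne (funext hc)
  set s : ℂ := g u0 with hs
  have hpm : ∀ u, g u = s ∨ g u = -s := by
    refine connected_induction G hconn (fun u => g u = s ∨ g u = -s) u0 (Or.inl hs.symm) ?_
    intro a b hadj hpa
    have hab := hg a b hadj
    rcases hpa with h' | h'
    · right; linear_combination hab - h'
    · left; linear_combination hab - h'
  apply hnb
  refine ⟨{u | g u = s}, ?_⟩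
  intro a b hadj
  have hab := hg a b hadj
  rcases hpm a with h' | h'
  · left
    refine ⟨h', ?_⟩
    intro hb
    simp only [Set.mem_setOf_eq] at hb
    rw [h', hb] at hab
    apply hu0
    linear_combination hab / 2
  · right
    constructor
    · intro ha
      simp only [Set.mem_setOf_eq] at ha
      rw [ha] at h'
      apply hu0
      linear_combination h' / 2
    · simp only [Set.mem_setOf_eq]
      rw [h'] at hab
      linear_combination hab

lemma ker_transpose_dim_one (hconn : G.Connected) (hb : IsBipartite G) :
    Module.finrank ℂ ↥(LinearMap.ker (incMat G)ᵀ.mulVecLin) = 1 := by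
  classical
  obtain ⟨B, hB⟩ := hb
  set ε : V → ℂ := fun u => if u ∈ B then 1 else -1 with hε
  have hεmem : ε ∈ LinearMap.ker (incMat G)ᵀ.mulVecLin := by
    rw [mem_ker_transpose_iff]
    intro a b hadj
    rcases hB a b hadj with ⟨ha, hb'⟩ | ⟨ha, hb'⟩ <;> simp [hε, ha, hb']
  obtain ⟨u0⟩ := hconn.nonempty
  have hεne : ε ≠ 0 := by
    intro hc
    have h1 := congrFun hc u0
    simp only [Pi.zero_apply, hε] at h1
    by_cases h : u0 ∈ B <;> simp [h] at h1
  have hεsq : ε u0 * ε u0 = 1 := by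
    simp only [hε]; by_cases h : u0 ∈ B <;> simp [h]
  have hspan : LinearMap.ker (incMat G)ᵀ.mulVecLin = Submodule.span ℂ {ε} := by
    apply le_antisymm
    · intro g hg
      rw [mem_ker_transpose_iff] at hg
      set c : ℂ := g u0 * ε u0 with hc
      have hgc : g = c • ε := by
        funext u
        have key : ∀ v, g v - c * ε v = 0 := by
          refine connected_induction G hconn (fun v => g v - c * ε v = 0) u0 ?_ ?_
          · have h1 : g u0 * (ε u0 * ε u0) = g u0 := by rw [hεsq, mul_one]
            linear_combination - h1
          · intro a b hadj hpa
            have h1 := hg a b hadj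
            have h2 : ε a + ε b = 0 := (mem_ker_transpose_iff G ε).mp hεmem a b hadj
            linear_combination h1 - c * h2 - hpa
        have h3 := key u
        simp only [Pi.smul_apply, smul_eq_mul]
        linear_combination h3
      rw [hgc]
      exact Submodule.smul_mem _ c (Submodule.mem_span_singleton_self ε)
    · rw [Submodule.span_singleton_le_iff_mem]
      exact hεmem
  rw [hspan]
  exact finrank_span_singleton hεne

end Aux

/-- For a connected graph with `m > n`, the geometric multiplicity of `−1`
as an eigenvalue of `B`, i.e. `dim ker(B + I)`, is `m − n + 1` if `G` is bipartite, and
`m − n` otherwise. -/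
theorem nbMatrix_geometric_multiplicity_neg_one
    [DecidableEq V] [Fintype V] (G : SimpleGraph V) [DecidableRel G.Adj]
    (hconn : G.Connected) (hm : Fintype.card V < G.edgeFinset.card) :
    (IsBipartite G →
      Module.finrank ℂ ↥(LinearMap.ker (nbMatrix G + 1).mulVecLin)
        = G.edgeFinset.card - Fintype.card V + 1) ∧
    (¬ IsBipartite G →
      Module.finrank ℂ ↥(LinearMap.ker (nbMatrix G + 1).mulVecLin)
        = G.edgeFinset.card - Fintype.card V) := by
  have hne : Fintype.card V ≠ G.edgeFinset.card := Nat.ne_of_lt hm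
  have hKdim : Module.finrank ℂ ↥(LinearMap.ker (nbMatrix G + 1).mulVecLin)
      = Module.finrank ℂ ↥(LinearMap.ker (incMat G).mulVecLin) :=
    (kerEquiv G hconn hne).finrank_eq
  have eq1 : (incMat G).rank + Module.finrank ℂ ↥(LinearMap.ker (incMat G).mulVecLin)
      = G.edgeFinset.card := by
    have h := LinearMap.finrank_range_add_finrank_ker (incMat G).mulVecLin
    rw [Module.finrank_pi, Fintype.card_coe] at h
    exact h
  have eq2 : ((incMat G)ᵀ).rank + Module.finrank ℂ ↥(LinearMap.ker (incMat G)ᵀ.mulVecLin)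
      = Fintype.card V := by
    have h := LinearMap.finrank_range_add_finrank_ker ((incMat G)ᵀ).mulVecLin
    rw [Module.finrank_pi] at h
    exact h
  have eq3 : ((incMat G)ᵀ).rank = (incMat G).rank := Matrix.rank_transpose _
  constructor
  · intro hb
    have hdt : Module.finrank ℂ ↥(LinearMap.ker (incMat G)ᵀ.mulVecLin) = 1 :=
      ker_transpose_dim_one G hconn hb
    rw [hKdim]
    omega
  · intro hnb
    have hdt : Module.finrank ℂ ↥(LinearMap.ker (incMat G)ᵀ.mulVecLin) = 0 := by
      rw [ker_transpose_bot G hconn hnb]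
      exact finrank_bot ℂ _
    rw [hKdim]
    omega
end
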